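/- (Reduction of almost r-embeddings to equivariant maps.) Let a be a prime, r = a^m, d ≥ 1, and n := d(r−1) − 1. Let G := (ℤ/a)^m act on the simplicial deleted product X^{\underline r} of a finite simplicial complex X by permuting the r coordinates, where the permutations correspond to the action of G on itself by left shifts. If there exists an almost r-embedding X → ℝ^d, then there exist a fixed-point-free continuous action of G on the sphere S^n and a G-equivariant continuous map X^{\underline r} → S^n. -/

import Mathlib

open CategoryTheory Geometry

/-- The singular chain complex functor with coefficients in a commutative ring `R`,
obtained from the singular simplicial set by applying the free `R`-module functor levelwise
and taking the alternating face map complex. -/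
noncomputable def singularChainComplexFunctor (R : Type) [CommRing R] :
    TopCat.{0} ⥤ ChainComplex (ModuleCat R) ℕ :=
  TopCat.toSSet ⋙ ((SimplicialObject.whiskering _ _).obj (ModuleCat.free R)) ⋙
    AlgebraicTopology.alternatingFaceMapComplex _

/-- Singular homology `H_n(X; R)`. -/
noncomputable def singularHomology (R : Type) [CommRing R] (n : ℕ)
    (X : Type) [TopologicalSpace X] : ModuleCat R :=
  ((singularChainComplexFunctor R).obj (TopCat.of X)).homology n

/-- A space is `n`-acyclic (with `ℤ/a` coefficients) if it is non-empty and its reduced singular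
homology with `ℤ/a` coefficients vanishes in all degrees `j ≤ n`; equivalently (over the field
`ℤ/a`), it is non-empty and its unreduced singular homology is isomorphic to that of a point in
all degrees `j ≤ n`. -/
def IsAcyclicSpace (a : ℕ) (X : Type) [TopologicalSpace X] (n : ℤ) : Prop :=
  Nonempty X ∧ ∀ j : ℕ, (j : ℤ) ≤ n →
    Nonempty ((singularHomology (ZMod a) j X) ≅ (singularHomology (ZMod a) j PUnit))
/-- The simplicial deleted product `X^{\underline r}` of a simplicial complex, as a subspace of
`|X|^r`: tuples `(x 0, …, x (r-1))` such that `x i` lies in (the realization of) the face `σ i`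
for some pairwise vertex-disjoint faces `σ 0, …, σ (r-1)`. -/
def deletedProduct {E : Type} [NormedAddCommGroup E] [NormedSpace ℝ E]
    (K : Geometry.SimplicialComplex ℝ E) (r : ℕ) : Set (Fin r → E) :=
  {x | ∃ σ : Fin r → Finset E, (∀ i, σ i ∈ K.faces) ∧
    (Pairwise fun i j => Disjoint (σ i) (σ j)) ∧ ∀ i, x i ∈ convexHull ℝ ((σ i : Set E))}

/-- The subcomplex `X − A` of all faces of `X` disjoint from the set `A`. -/
def Geometry.SimplicialComplex.minus {E : Type} [NormedAddCommGroup E] [NormedSpace ℝ E]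
    (K : Geometry.SimplicialComplex ℝ E) (A : Set E) : Geometry.SimplicialComplex ℝ E where
  faces := {τ | τ ∈ K.faces ∧ Disjoint (τ : Set E) A}
  isRelLowerSet_faces := fun _ h => ⟨K.isRelLowerSet_faces.prop_of_mem h.1,
    fun _ hts ht => ⟨K.isRelLowerSet_faces.mem_of_le h.1 hts ht,
      Set.disjoint_of_subset_left (by exact_mod_cast hts) h.2⟩⟩
  indep h := K.indep h.1
  inter_subset_convexHull hs ht := K.inter_subset_convexHull hs.1 ht.1

/-- `X` is `s`-complementary `n`-acyclic (with `ℤ/a` coefficients) if for every `i ≤ s` and all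
pairwise disjoint faces `σ 1, …, σ i` of `X`, the complex `X − σ 1 − … − σ i` is
`(n − dim σ 1 − … − dim σ i)`-acyclic. -/
def IsComplementaryAcyclic {E : Type} [NormedAddCommGroup E] [NormedSpace ℝ E]
    (a : ℕ) (K : Geometry.SimplicialComplex ℝ E) (s : ℕ) (n : ℤ) : Prop :=
  ∀ i : ℕ, i ≤ s → ∀ σ : Fin i → Finset E, (∀ j, σ j ∈ K.faces) →
    (Pairwise fun j k => Disjoint (σ j) (σ k)) →
    IsAcyclicSpace a ((K.minus (⋃ j, ((σ j : Set E)))).space : Set E)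
      (n - ∑ j, (((σ j).card : ℤ) - 1))
/-- A continuous map `f : |X| → ℝ^d` is an almost `r`-embedding if the images of every `r`
pairwise (vertex-)disjoint faces of `X` have empty common intersection. -/
def IsAlmostREmbedding {E : Type} [NormedAddCommGroup E] [NormedSpace ℝ E]
    (K : Geometry.SimplicialComplex ℝ E) (r d : ℕ)
    (f : K.space → EuclideanSpace ℝ (Fin d)) : Prop :=
  Continuous f ∧ ∀ σ : Fin r → Finset E, (∀ i, σ i ∈ K.faces) →
    (Pairwise fun i j => Disjoint (σ i) (σ j)) →
    (⋂ i, f '' {x : K.space | (x : E) ∈ convexHull ℝ ((σ i : Set E))}) = ∅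
/-!
STATEMENT 4 (Reduction of almost `r`-embeddings to equivariant maps).
Let `a` be a prime, `r = a ^ m`, `d ≥ 1`, `n := d(r-1) - 1`. The group `G = (ℤ/a)^m` acts on the
deleted product `X^{\underline r}` by permuting the `r` coordinates, the permutations
corresponding (via a bijection `e : G ≃ Fin r`) to the action of `G` on itself by left shifts.
If there is an almost `r`-embedding `X → ℝ^d`, then there are a fixed-point free continuous
action of `G` on `S^n` (the unit sphere of `ℝ^{n+1} = ℝ^{d(r-1)}`) and a `G`-equivariant
continuous map `X^{\underline r} → S^n`.
-/
namespace AlmostREmbAux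
noncomputable section
variable (r d : ℕ)

abbrev U := PiLp 2 (fun _ : Fin r => EuclideanSpace ℝ (Fin d))

def sumMap : U r d →ₗ[ℝ] EuclideanSpace ℝ (Fin d) where
  toFun v := ∑ i, v i
  map_add' x y := by show ∑ i, (x + y) i = _; simp [Finset.sum_add_distrib]
  map_smul' c x := by show ∑ i, (c • x) i = _; simp [Finset.smul_sum]

lemma sumMap_apply (v : U r d) : sumMap r d v = ∑ i, v i := rfl

def W : Submodule ℝ (U r d) := LinearMap.ker (sumMap r d)

lemma mem_W_iff (v : U r d) : v ∈ W r d ↔ ∑ i, v i = 0 := Iff.rfl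

instance : FiniteDimensional ℝ (U r d) :=
  Module.Finite.equiv (WithLp.linearEquiv 2 ℝ _).symm

lemma sumMap_surjective (hr : 1 ≤ r) : Function.Surjective (sumMap r d) := by
  intro c
  have hrne : (r : ℝ) ≠ 0 := Nat.cast_ne_zero.2 (by omega)
  refine ⟨(WithLp.equiv 2 _).symm (fun _ => (r : ℝ)⁻¹ • c), ?_⟩
  show ∑ _i : Fin r, (r : ℝ)⁻¹ • c = c
  rw [Finset.sum_const, Finset.card_univ, Fintype.card_fin,
    ← Nat.cast_smul_eq_nsmul ℝ, smul_smul, mul_inv_cancel₀ hrne, one_smul]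

lemma finrank_W (hr : 1 ≤ r) : Module.finrank ℝ (W r d) = d * (r - 1) := by
  have h1 := LinearMap.finrank_range_add_finrank_ker (sumMap r d)
  rw [LinearMap.range_eq_top.2 (sumMap_surjective r d hr), finrank_top] at h1
  have h2 : Module.finrank ℝ (U r d) = r * d := by
    rw [(WithLp.linearEquiv 2 ℝ _).finrank_eq, Module.finrank_pi_fintype]
    simp [finrank_euclideanSpace_fin, Finset.sum_const, mul_comm]
  have h3 : Module.finrank ℝ (EuclideanSpace ℝ (Fin d)) = d := finrank_euclideanSpace_fin
  rw [h2, h3] at h1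
  have h4 : Module.finrank ℝ (LinearMap.ker (sumMap r d)) = r * d - d := by omega
  rw [W, h4]
  cases r with
  | zero => omega
  | succ k => simp [Nat.succ_sub_one]; ring_nf; omega

def phi (h : Module.finrank ℝ (W r d) = d * (r - 1)) :
    W r d ≃ₗᵢ[ℝ] EuclideanSpace ℝ (Fin (d * (r - 1))) :=
  ((stdOrthonormalBasis ℝ (W r d)).reindex (finCongr h)).repr

def rho (p : Fin r ≃ Fin r) : U r d ≃ₗᵢ[ℝ] U r d :=
  LinearIsometryEquiv.piLpCongrLeft 2 ℝ _ p.symm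

lemma rho_apply (p : Fin r ≃ Fin r) (v : U r d) (i : Fin r) :
    rho r d p v i = v (p i) := by
  simp [rho, LinearIsometryEquiv.piLpCongrLeft_apply, Equiv.piCongrLeft']

lemma rho_mem (p : Fin r ≃ Fin r) {v : U r d} (hv : v ∈ W r d) :
    rho r d p v ∈ W r d := by
  rw [mem_W_iff] at hv ⊢
  calc ∑ i, rho r d p v i = ∑ i, v (p i) :=
        Finset.sum_congr rfl fun i _ => rho_apply r d p v i
    _ = ∑ i, v i := Equiv.sum_comp p v
    _ = 0 := hv

end
end AlmostREmbAux

open AlmostREmbAux in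
theorem almost_r_embedding_gives_equivariant_map
    {E : Type} [NormedAddCommGroup E] [NormedSpace ℝ E]
    (a m r d : ℕ) (ha : a.Prime) (hr : r = a ^ m) (hd : 1 ≤ d)
    (K : Geometry.SimplicialComplex ℝ E) (hKfin : K.faces.Finite)
    (hf : ∃ f : K.space → EuclideanSpace ℝ (Fin d), IsAlmostREmbedding K r d f) :
    ∃ e : (Fin m → ZMod a) ≃ Fin r,
      -- the left-shift permutation action of `G` preserves the deleted product …
      (∀ (g : Fin m → ZMod a), ∀ x ∈ deletedProduct K r,
        (fun i => x (e (g + e.symm i))) ∈ deletedProduct K r) ∧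
      -- … and there are a fixed-point free continuous action of `G` on `S^n`
      ∃ actS : (Fin m → ZMod a) →
          (Metric.sphere (0 : EuclideanSpace ℝ (Fin (d * (r - 1)))) 1 : Set _) →
          (Metric.sphere (0 : EuclideanSpace ℝ (Fin (d * (r - 1)))) 1 : Set _),
        (∀ g, Continuous (actS g)) ∧
        (∀ y, actS 0 y = y) ∧
        (∀ g h y, actS (g + h) y = actS g (actS h y)) ∧
        (∀ y, ∃ g, actS g y ≠ y) ∧
        -- and a `G`-equivariant continuous map `X^{\underline r} → S^n`.
        ∃ F : deletedProduct K r →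
            (Metric.sphere (0 : EuclideanSpace ℝ (Fin (d * (r - 1)))) 1 : Set _),
          Continuous F ∧
          ∀ (g : Fin m → ZMod a) (x : deletedProduct K r)
            (hgx : (fun i => (x : Fin r → E) (e (g + e.symm i))) ∈ deletedProduct K r),
            F ⟨fun i => (x : Fin r → E) (e (g + e.symm i)), hgx⟩ = actS g (F x) := by

  classical
  obtain ⟨f, hfc, hfr⟩ := hf
  haveI : NeZero a := ⟨ha.pos.ne'⟩
  have hr1 : 1 ≤ r := hr ▸ Nat.one_le_pow _ _ ha.pos
  have hrne : (r : ℝ) ≠ 0 := Nat.cast_ne_zero.2 (by omega)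
  have hcard : Fintype.card (Fin m → ZMod a) = r := by
    simp [ZMod.card, hr]
  obtain ⟨e⟩ : Nonempty ((Fin m → ZMod a) ≃ Fin r) := ⟨Fintype.equivFinOfCardEq hcard⟩
  -- the permutations
  let pg : (Fin m → ZMod a) → (Fin r ≃ Fin r) :=
    fun g => e.symm.trans ((Equiv.addLeft g).trans e)
  have pg_apply : ∀ g i, pg g i = e (g + e.symm i) := fun g i => rfl
  have hperm : ∀ g : Fin m → ZMod a, ∀ x ∈ deletedProduct K r,
      (fun i => x (e (g + e.symm i))) ∈ deletedProduct K r := by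
    rintro g x ⟨σ, hσ, hdisj, hmem⟩
    refine ⟨fun i => σ (e (g + e.symm i)), fun i => hσ _, ?_, fun i => hmem _⟩
    intro i j hij
    exact hdisj fun hEq => hij (e.symm.injective (add_left_cancel (e.injective hEq)))
  refine ⟨e, hperm, ?_⟩
  -- setup of the sphere action
  let φ := phi r d (finrank_W r d hr1)
  let actW : (Fin m → ZMod a) → W r d → W r d :=
    fun g w => ⟨rho r d (pg g) w, rho_mem r d (pg g) w.2⟩
  have actW_coe : ∀ g w, (actW g w : U r d) = rho r d (pg g) w := fun g w => rfl
  have actW_norm : ∀ g w, ‖actW g w‖ = ‖w‖ := by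
    intro g w
    show ‖(rho r d (pg g)) (w : U r d)‖ = ‖(w : U r d)‖
    exact (rho r d (pg g)).norm_map _
  let actS : (Fin m → ZMod a) →
      (Metric.sphere (0 : EuclideanSpace ℝ (Fin (d * (r - 1)))) 1 : Set _) →
      (Metric.sphere (0 : EuclideanSpace ℝ (Fin (d * (r - 1)))) 1 : Set _) :=
    fun g y => ⟨φ (actW g (φ.symm y)), by
      rw [mem_sphere_zero_iff_norm, φ.norm_map, actW_norm, φ.symm.norm_map]
      exact mem_sphere_zero_iff_norm.1 y.2⟩
  have actS_coe : ∀ g y, (actS g y : EuclideanSpace ℝ (Fin (d * (r - 1)))) =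
      φ (actW g (φ.symm y)) := fun g y => rfl
  refine ⟨actS, ?_, ?_, ?_, ?_, ?_⟩
  · -- continuity
    intro g
    apply Continuous.subtype_mk
    apply φ.continuous.comp
    apply Continuous.subtype_mk
    exact (rho r d (pg g)).continuous.comp
      (continuous_subtype_val.comp (φ.symm.continuous.comp continuous_subtype_val))
  · -- identity
    intro y
    apply Subtype.ext
    rw [actS_coe]
    have h1 : actW 0 (φ.symm y) = φ.symm y := by
      apply Subtype.ext
      rw [actW_coe]
      refine PiLp.ext fun i => ?_
      rw [rho_apply]
      have hpg0 : pg 0 i = i := by rw [pg_apply]; simp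
      rw [hpg0]
    rw [h1, φ.apply_symm_apply]
  · -- composition
    intro g h y
    apply Subtype.ext
    rw [actS_coe, actS_coe]
    congr 1
    have h1 : φ.symm (actS h y) = actW h (φ.symm y) := by
      rw [actS_coe, φ.symm_apply_apply]
    rw [h1]
    apply Subtype.ext
    rw [actW_coe, actW_coe, actW_coe]
    refine PiLp.ext fun i => ?_
    rw [rho_apply, rho_apply, rho_apply, pg_apply, pg_apply, pg_apply,
      Equiv.symm_apply_apply]
    have hadd : g + h + e.symm i = h + (g + e.symm i) := by abel
    rw [hadd]
  · -- fixed-point free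
    intro y
    by_contra hcon
    push_neg at hcon
    have hfix : ∀ g, rho r d (pg g) (φ.symm y : U r d) = (φ.symm y : U r d) := by
      intro g
      have h2 : actW g (φ.symm y) = φ.symm y := by
        have h3 := Subtype.ext_iff.1 (hcon g)
        rw [actS_coe] at h3
        have h4 := congrArg φ.symm h3
        rwa [φ.symm_apply_apply] at h4
      rw [← actW_coe g (φ.symm y), h2]
    have hconst : ∀ i j : Fin r, (φ.symm y : U r d) i = (φ.symm y : U r d) j := by
      intro i j
      have h4 : (φ.symm y : U r d) i
          = rho r d (pg (e.symm j - e.symm i)) (φ.symm y : U r d) i := by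
        rw [hfix]
      rw [rho_apply, pg_apply] at h4
      rw [h4]
      rw [sub_add_cancel, Equiv.apply_symm_apply]
    have hmemW := (φ.symm y).2
    rw [mem_W_iff] at hmemW
    have i0 : Fin r := ⟨0, by omega⟩
    have hsum : ∑ i : Fin r, (φ.symm y : U r d) i = (r : ℝ) • (φ.symm y : U r d) i0 := by
      rw [Finset.sum_congr rfl (fun i _ => hconst i i0), Finset.sum_const,
        Finset.card_univ, Fintype.card_fin, ← Nat.cast_smul_eq_nsmul ℝ]
    rw [hsum] at hmemW
    have h0 : (φ.symm y : U r d) i0 = 0 := by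
      rcases smul_eq_zero.1 hmemW with h | h
      · exact absurd h hrne
      · exact h
    have hw0 : (φ.symm y : U r d) = 0 := by
      refine PiLp.ext fun i => ?_
      rw [hconst i i0, h0]
      rfl
    have hy0 : (y : EuclideanSpace ℝ (Fin (d * (r - 1)))) = 0 := by
      have : φ.symm y = 0 := by
        apply Subtype.ext
        rw [hw0]
        rfl
      have h5 := congrArg φ this
      rw [φ.apply_symm_apply, map_zero] at h5
      exact h5
    have := mem_sphere_zero_iff_norm.1 y.2
    rw [hy0, norm_zero] at this
    exact one_ne_zero this.symm
  · -- the equivariant map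
    have hmemsp : ∀ x ∈ deletedProduct K r, ∀ i, x i ∈ K.space := by
      rintro x ⟨σ, hσ, -, hmem⟩ i
      exact Set.mem_biUnion (hσ i) (hmem i)
    let g0 : deletedProduct K r → U r d :=
      fun x => (WithLp.equiv 2 _).symm (fun i => f ⟨x.1 i, hmemsp x.1 x.2 i⟩)
    have g0_apply : ∀ x i, g0 x i = f ⟨x.1 i, hmemsp x.1 x.2 i⟩ := fun x i => rfl
    have hg0c : Continuous g0 := by
      apply (PiLp.continuous_toLp 2 _).comp
      apply continuous_pi
      intro i
      exact hfc.comp (Continuous.subtype_mk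
        ((continuous_apply i).comp continuous_subtype_val) _)
    let wf : deletedProduct K r → U r d :=
      fun x => g0 x - (WithLp.equiv 2 _).symm (fun _ => (r : ℝ)⁻¹ • ∑ j, g0 x j)
    have wf_apply : ∀ x i, wf x i = g0 x i - (r : ℝ)⁻¹ • ∑ j, g0 x j :=
      fun x i => rfl
    have hwfW : ∀ x, wf x ∈ W r d := by
      intro x
      rw [mem_W_iff]
      calc ∑ i, wf x i = ∑ i : Fin r, (g0 x i - (r : ℝ)⁻¹ • ∑ j, g0 x j) :=
            Finset.sum_congr rfl fun i _ => wf_apply x i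
        _ = 0 := by
            rw [Finset.sum_sub_distrib, Finset.sum_const, Finset.card_univ,
              Fintype.card_fin, ← Nat.cast_smul_eq_nsmul ℝ, smul_smul,
              mul_inv_cancel₀ hrne, one_smul, sub_self]
    have hwfne : ∀ x, wf x ≠ 0 := by
      intro x hx0
      obtain ⟨σ, hσ, hdisj, hmem⟩ := x.2
      have hiz := hfr σ hσ hdisj
      have hcmem : (r : ℝ)⁻¹ • ∑ j, g0 x j ∈
          ⋂ i, f '' {p : K.space | (p : E) ∈ convexHull ℝ ((σ i : Set E))} := by
        rw [Set.mem_iInter]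
        intro i
        refine ⟨⟨x.1 i, hmemsp x.1 x.2 i⟩, hmem i, ?_⟩
        have h1 : wf x i = 0 := by rw [hx0]; rfl
        rw [wf_apply, sub_eq_zero] at h1
        rw [← g0_apply x i, h1]
      rw [hiz] at hcmem
      exact hcmem
    have hnorm : ∀ x, ‖wf x‖ ≠ 0 := fun x => norm_ne_zero_iff.2 (hwfne x)
    have hwfc : Continuous wf := by
      apply hg0c.sub
      apply (PiLp.continuous_toLp 2 _).comp
      apply continuous_pi
      intro _
      apply Continuous.fun_const_smul
      exact continuous_finset_sum _ fun j _ => (PiLp.continuous_apply 2 _ j).comp hg0c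
    let F : deletedProduct K r →
        (Metric.sphere (0 : EuclideanSpace ℝ (Fin (d * (r - 1)))) 1 : Set _) :=
      fun x => ⟨φ (‖wf x‖⁻¹ • (⟨wf x, hwfW x⟩ : W r d)), by
        rw [mem_sphere_zero_iff_norm, φ.norm_map, norm_smul, norm_inv, norm_norm]
        have h2 : ‖(⟨wf x, hwfW x⟩ : W r d)‖ = ‖wf x‖ := rfl
        rw [h2, inv_mul_cancel₀ (hnorm x)]⟩
    have F_coe : ∀ x, (F x : EuclideanSpace ℝ (Fin (d * (r - 1)))) =
        φ (‖wf x‖⁻¹ • (⟨wf x, hwfW x⟩ : W r d)) := fun x => rfl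
    refine ⟨F, ?_, ?_⟩
    · apply Continuous.subtype_mk
      apply φ.continuous.comp
      exact (hwfc.norm.inv₀ hnorm).smul (Continuous.subtype_mk hwfc _)
    · intro g x hgx
      set x' : deletedProduct K r := ⟨fun i => (x : Fin r → E) (e (g + e.symm i)), hgx⟩
      have hg0' : ∀ j, g0 x' j = g0 x (pg g j) := fun j => rfl
      have hsum' : ∑ j, g0 x' j = ∑ j, g0 x j := by
        rw [Finset.sum_congr rfl fun j _ => hg0' j]
        exact Equiv.sum_comp (pg g) (g0 x)
      have hkey : wf x' = rho r d (pg g) (wf x) := by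
        refine PiLp.ext fun i => ?_
        rw [rho_apply, wf_apply, wf_apply, hg0' i, hsum']
      have hnormeq : ‖wf x'‖ = ‖wf x‖ := by
        rw [hkey, (rho r d (pg g)).norm_map]
      apply Subtype.ext
      rw [F_coe, actS_coe]
      have h1 : φ.symm (F x) = ‖wf x‖⁻¹ • (⟨wf x, hwfW x⟩ : W r d) := by
        rw [F_coe, φ.symm_apply_apply]
      rw [h1]
      congr 1
      apply Subtype.ext
      show ‖wf x'‖⁻¹ • wf x' = rho r d (pg g) (‖wf x‖⁻¹ • wf x)
      rw [hnormeq, hkey, (rho r d (pg g)).map_smul]
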